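/- For every even p ≥ 2, the proper p-vertex coloring of the star K_{1,p-1} assigning color 0 to the center and the distinct colors 1, ..., p−1 to the leaves is not induced by any improper twin p-edge coloring, because p(p−1)/2 ≢ 0 (mod p). -/

import Mathlib

open Finset

-- The vertex label induced by an edge coloring: `twinLabel G s v = Σ_{e ∈ E_v} s e` in `ZMod k`.
open scoped Classical in
noncomputable def twinLabel {V : Type*} [Fintype V] (G : SimpleGraph V) {k : ℕ}
    (s : Sym2 V → ZMod k) (v : V) : ZMod k :=
  ∑ e ∈ G.incidenceFinset v, s e

/-- `s` is an improper twin `k`-edge coloring of `G`: the induced vertex labeling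
is a proper vertex coloring. -/
def IsImproperTwin {V : Type*} [Fintype V] (G : SimpleGraph V) (k : ℕ)
    (s : Sym2 V → ZMod k) : Prop :=
  ∀ ⦃u v : V⦄, G.Adj u v → twinLabel G s u ≠ twinLabel G s v

/-- The improper twin chromatic index: the least `k ≥ 2` admitting an improper twin
`k`-edge coloring. -/
noncomputable def improperTwinIndex {V : Type*} [Fintype V] (G : SimpleGraph V) : ℕ :=
  sInf {k | 2 ≤ k ∧ ∃ s : Sym2 V → ZMod k, IsImproperTwin G k s}

/-- The star `K_{1,p-1}` on `Fin p` with center `0`. -/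
def starGraph (p : ℕ) : SimpleGraph (Fin p) where
  Adj i j := (i.val = 0 ∨ j.val = 0) ∧ i ≠ j
  symm := ⟨by intro i j h; exact ⟨h.1.symm, h.2.symm⟩⟩
  loopless := ⟨by intro i h; exact h.2 rfl⟩

lemma part1 (p : ℕ) (hp : 2 ≤ p) (hpe : Even p) : ¬ ((p * (p - 1) / 2) % p = 0) := by
  obtain ⟨m, rfl⟩ := hpe
  have hm : 1 ≤ m := by omega
  have key : (m + m) * (m + m - 1) / 2 = m * (m + m - 1) := by
    have : (m + m) * (m + m - 1) = 2 * (m * (m + m - 1)) := by ring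
    omega
  rw [key]
  intro h
  have hdvd : (m + m) ∣ m * (m + m - 1) := Nat.dvd_of_mod_eq_zero h
  have hco : Nat.Coprime (m + m) (m + m - 1) := by
    have : m + m - 1 + 1 = m + m := by omega
    rw [← this]; simpa using (Nat.coprime_succ_self (m + m - 1)).symm
  have hdm : (m + m) ∣ m := Nat.Coprime.dvd_of_dvd_mul_right hco hdvd
  have := Nat.le_of_dvd (by omega) hdm
  omega

lemma leaf_inc (p : ℕ) (hp : 2 ≤ p) (i : Fin p) (hi : i.val ≠ 0)
    {instF : Fintype ((starGraph p).neighborSet i)} {instD : DecidableEq (Fin p)} :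
    @SimpleGraph.incidenceFinset _ (starGraph p) i instF instD
      = {s(⟨0, by omega⟩, i)} := by
  have hi' : i ≠ ⟨0, by omega⟩ := fun h => hi (by simp [h])
  ext e
  induction e with
  | h a b =>
    simp only [SimpleGraph.mem_incidenceFinset, SimpleGraph.incidenceSet,
      Set.mem_setOf_eq, SimpleGraph.mem_edgeSet, Set.mem_sep_iff, mem_singleton,
      Sym2.mem_iff, Sym2.eq, Sym2.rel_iff', Prod.mk.injEq, Prod.swap_prod_mk]
    constructor
    · rintro ⟨⟨h0, hne⟩, h | h⟩
      · subst h
        rcases h0 with h | h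
        · exact absurd h hi
        · right; exact ⟨rfl, Fin.ext h⟩
      · subst h
        rcases h0 with h | h
        · left; exact ⟨Fin.ext h, rfl⟩
        · exact absurd h hi
    · rintro (⟨rfl, rfl⟩ | ⟨rfl, rfl⟩)
      · exact ⟨⟨Or.inl rfl, hi'.symm⟩, Or.inr rfl⟩
      · exact ⟨⟨Or.inr rfl, hi'⟩, Or.inl rfl⟩

lemma center_inc (p : ℕ) (hp : 2 ≤ p) (c : Fin p) (hcv : c.val = 0)
    {instF : Fintype ((starGraph p).neighborSet c)} {instD : DecidableEq (Fin p)} :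
    @SimpleGraph.incidenceFinset _ (starGraph p) c instF instD =
      (univ.filter (fun j : Fin p => j.val ≠ 0)).image
        (fun j => s(c, j)) := by
  have hval : ∀ x : Fin p, x.val = 0 → x = c := fun x hx => Fin.ext (hx.trans hcv.symm)
  ext e
  induction e with
  | h a b =>
    simp only [SimpleGraph.mem_incidenceFinset, SimpleGraph.incidenceSet,
      Set.mem_setOf_eq, SimpleGraph.mem_edgeSet, Set.mem_sep_iff, mem_image,
      mem_filter, mem_univ, true_and, Sym2.mem_iff, Sym2.eq, Sym2.rel_iff',
      Prod.mk.injEq, Prod.swap_prod_mk]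
    constructor
    · rintro ⟨⟨h0, hne⟩, h | h⟩
      · subst h
        refine ⟨b, fun hb => hne (hval b hb).symm, Or.inl ⟨rfl, rfl⟩⟩
      · subst h
        refine ⟨a, fun ha => hne (hval a ha), Or.inr ⟨rfl, rfl⟩⟩
    · rintro ⟨j, hj, ⟨rfl, rfl⟩ | ⟨rfl, rfl⟩⟩
      · exact ⟨⟨Or.inl hcv, fun hh => hj ((congrArg Fin.val hh.symm).trans hcv)⟩, Or.inl rfl⟩
      · exact ⟨⟨Or.inr hcv, fun hh => hj ((congrArg Fin.val hh).trans hcv)⟩, Or.inr rfl⟩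


lemma center_sum (p : ℕ) (hp : 2 ≤ p) (c : Fin p) (hcv : c.val = 0) {k : ℕ}
    (s : Sym2 (Fin p) → ZMod k)
    {instF : Fintype ((starGraph p).neighborSet c)} {instD : DecidableEq (Fin p)} :
    ∑ e ∈ @SimpleGraph.incidenceFinset _ (starGraph p) c instF instD, s e
      = ∑ j ∈ univ.filter (fun j : Fin p => j.val ≠ 0), s (s(c, j)) := by
  rw [center_inc p hp c hcv]
  refine sum_image ?_
  intro x hx y hy hxy
  simp only [Sym2.eq, Sym2.rel_iff', Prod.mk.injEq, Prod.swap_prod_mk] at hxy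
  rcases hxy with ⟨-, h⟩ | ⟨h1, h2⟩
  · exact h
  · simp only [mem_coe, coe_filter, Set.mem_setOf_eq, mem_filter] at hx
    exact absurd ((congrArg Fin.val h2).trans hcv) hx.2

theorem stmt_13 (p : ℕ) (hp : 2 ≤ p) (hpe : Even p) :
    ¬ ((p * (p - 1) / 2) % p = 0) ∧
    ¬ ∃ s : Sym2 (Fin p) → ZMod p,
        ∀ i : Fin p, twinLabel (starGraph p) s i = ((i : ℕ) : ZMod p) := by
  have part1 := part1 p hp hpe
  refine ⟨part1, ?_⟩
  rintro ⟨s, hs⟩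
  set c : Fin p := ⟨0, by omega⟩ with hc
  have hleaf : ∀ j : Fin p, j.val ≠ 0 →
      twinLabel (starGraph p) s j = s (s(c, j)) := by
    intro j hj
    rw [twinLabel, leaf_inc p hp j hj]
    exact sum_singleton _ _
  have hcenter : twinLabel (starGraph p) s c =
      ∑ j ∈ univ.filter (fun j : Fin p => j.val ≠ 0), s (s(c, j)) := by
    rw [twinLabel]
    exact center_sum p hp c rfl s
  have hsum : (0 : ZMod p) = ∑ j ∈ univ.filter (fun j : Fin p => j.val ≠ 0),
      ((j : ℕ) : ZMod p) := by
    have h0 : twinLabel (starGraph p) s c = 0 := by simpa [hc] using hs c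
    rw [← h0, hcenter]
    refine Finset.sum_congr rfl fun j hj => ?_
    rw [← hleaf j (mem_filter.mp hj).2, hs j]
  have hall : ∑ j ∈ univ.filter (fun j : Fin p => j.val ≠ 0), ((j : ℕ) : ZMod p)
      = ∑ j : Fin p, ((j : ℕ) : ZMod p) := by
    rw [← Finset.sum_filter_add_sum_filter_not univ (fun j : Fin p => j.val ≠ 0)]
    have : ∑ j ∈ univ.filter (fun j : Fin p => ¬ j.val ≠ 0), ((j : ℕ) : ZMod p) = 0 := by
      apply Finset.sum_eq_zero
      intro j hj
      simp only [mem_filter, not_not] at hj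
      simp [hj.2]
    rw [this, add_zero]
  have hgauss : ∑ j : Fin p, ((j : ℕ) : ZMod p) = ((p * (p - 1) / 2 : ℕ) : ZMod p) := by
    rw [← Nat.cast_sum]
    congr 1
    rw [Fin.sum_univ_eq_sum_range (fun i => i) p, Finset.sum_range_id, Nat.mul_comm]
  have : ((p * (p - 1) / 2 : ℕ) : ZMod p) = 0 := by
    rw [← hgauss, ← hall, ← hsum]
  haveI hnz : NeZero p := ⟨by omega⟩
  rw [ZMod.natCast_eq_zero_iff] at this
  exact part1 (Nat.mod_eq_zero_of_dvd this)
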